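/- Let μ be an even isotropic measure on S^{n-1} and H ∈ G_{n,k}. For every x ∈ H, the support function of the section of the polar of C = conv(supp μ) is bounded as h_{C°∩H}(x) ≤ ∫_{S^{n-1}∖H^⊥} |⟨x, P_H u⟩| dμ(u). -/

import Mathlib

open MeasureTheory
open scoped RealInnerProductSpace ENNReal

/-- The support of a measure. -/
def msupport {α : Type*} [TopologicalSpace α] [MeasurableSpace α] (μ : Measure α) : Set α :=
  {x | ∀ U ∈ nhds x, 0 < μ U}

/-- Support function `h_K(x) = sup {⟨x,y⟩ : y ∈ K}`. -/
noncomputable def suppFn {n : ℕ} (K : Set (EuclideanSpace ℝ (Fin n)))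
    (x : EuclideanSpace ℝ (Fin n)) : ℝ :=
  sSup ((fun y => ⟪x, y⟫) '' K)

/-- The polar body `K° = {x : ⟨x,y⟩ ≤ 1 for all y ∈ K}`. -/
def polarBody {n : ℕ} (K : Set (EuclideanSpace ℝ (Fin n))) : Set (EuclideanSpace ℝ (Fin n)) :=
  {x | ∀ y ∈ K, ⟪x, y⟫ ≤ 1}

lemma ae_msupport {α : Type*} [TopologicalSpace α] [MeasurableSpace α]
    [OpensMeasurableSpace α] [SecondCountableTopology α] (μ : Measure α) :
    μ (msupport μ)ᶜ = 0 := by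
  obtain ⟨b, bct, -, hb⟩ := TopologicalSpace.exists_countable_basis α
  have hsub : (msupport μ)ᶜ ⊆ ⋃ s ∈ {s ∈ b | μ s = 0}, s := by
    intro z hz
    simp only [msupport, Set.mem_compl_iff, Set.mem_setOf_eq, not_forall] at hz
    obtain ⟨U, hU, hU0⟩ := hz
    obtain ⟨s, hs, hzs, hsU⟩ := hb.mem_nhds_iff.mp hU
    refine Set.mem_biUnion ⟨hs, le_antisymm ?_ zero_le⟩ hzs
    calc μ s ≤ μ U := measure_mono hsU
    _ = 0 := by simpa using hU0
  refine measure_mono_null hsub ?_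
  rw [measure_biUnion_null_iff (bct.mono (Set.sep_subset _ _))]
  exact fun s hs => hs.2

lemma neg_mem_msupport {n : ℕ} (μ : Measure (EuclideanSpace ℝ (Fin n)))
    (heven : Measure.map (fun u => -u) μ = μ) {u : EuclideanSpace ℝ (Fin n)}
    (hu : u ∈ msupport μ) : -u ∈ msupport μ := by
  intro U hU
  obtain ⟨V, hVU, hVopen, hV⟩ := mem_nhds_iff.mp hU
  have hnV : (fun w : EuclideanSpace ℝ (Fin n) => -w) ⁻¹' V ∈ nhds u := by
    have : ContinuousAt (fun w : EuclideanSpace ℝ (Fin n) => -w) u := continuous_neg.continuousAt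
    exact this.preimage_mem_nhds (by simpa using hVopen.mem_nhds hV)
  have h1 : 0 < μ ((fun w : EuclideanSpace ℝ (Fin n) => -w) ⁻¹' V) := hu _ hnV
  have h2 : μ V = μ ((fun w : EuclideanSpace ℝ (Fin n) => -w) ⁻¹' V) := by
    conv_lhs => rw [← heven]
    exact Measure.map_apply measurable_neg hVopen.measurableSet
  calc (0:ℝ≥0∞) < μ V := h2 ▸ h1
  _ ≤ μ U := measure_mono hVU

theorem stmt15 (n k : ℕ) (μ : Measure (EuclideanSpace ℝ (Fin n))) [IsFiniteMeasure μ]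
    (hsph : μ (Metric.sphere (0 : EuclideanSpace ℝ (Fin n)) 1)ᶜ = 0)
    (hiso : ∀ x : EuclideanSpace ℝ (Fin n), ∫ u, ⟪x, u⟫ ^ 2 ∂μ = ‖x‖ ^ 2)
    (heven : Measure.map (fun u => -u) μ = μ)
    (H : Submodule ℝ (EuclideanSpace ℝ (Fin n))) (hH : Module.finrank ℝ H = k)
    (C : Set (EuclideanSpace ℝ (Fin n))) (hC : C = convexHull ℝ (msupport μ))
    (x : EuclideanSpace ℝ (Fin n)) (hx : x ∈ H) :
    suppFn (polarBody C ∩ (H : Set (EuclideanSpace ℝ (Fin n)))) x ≤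
      ∫ u in {u | (Submodule.orthogonalProjection H u : EuclideanSpace ℝ (Fin n)) ≠ 0},
        |⟪x, (Submodule.orthogonalProjection H u : EuclideanSpace ℝ (Fin n))⟫| ∂μ := by
  have hnorm : ∀ᵐ u ∂μ, ‖u‖ = 1 := by
    have : ∀ᵐ u ∂μ, u ∈ Metric.sphere (0 : EuclideanSpace ℝ (Fin n)) 1 := mem_ae_iff.mpr hsph
    filter_upwards [this] with u hu
    simpa [mem_sphere_zero_iff_norm] using hu
  have hsupp : ∀ᵐ u ∂μ, u ∈ msupport μ := mem_ae_iff.mpr (ae_msupport μ)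
  -- integrability
  have hmul : ∀ a b : EuclideanSpace ℝ (Fin n),
      Integrable (fun u => ⟪a, u⟫ * ⟪b, u⟫) μ := by
    intro a b
    refine Integrable.mono' (integrable_const (‖a‖ * ‖b‖)) ?_ ?_
    · exact ((continuous_const.inner continuous_id).mul
        (continuous_const.inner continuous_id)).aestronglyMeasurable
    · filter_upwards [hnorm] with u hu
      rw [Real.norm_eq_abs, abs_mul]
      have hstep : |⟪a, u⟫| * |⟪b, u⟫| ≤ (‖a‖ * ‖u‖) * (‖b‖ * ‖u‖) :=
        mul_le_mul (abs_real_inner_le_norm a u) (abs_real_inner_le_norm b u)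
          (abs_nonneg _) (by positivity)
      calc |⟪a, u⟫| * |⟪b, u⟫| ≤ (‖a‖ * ‖u‖) * (‖b‖ * ‖u‖) := hstep
      _ = ‖a‖ * ‖b‖ := by rw [hu]; ring
  have hint : ∀ a : EuclideanSpace ℝ (Fin n), Integrable (fun u => |⟪a, u⟫|) μ := by
    intro a
    refine Integrable.mono' (integrable_const ‖a‖) ?_ ?_
    · exact (continuous_const.inner continuous_id).abs.aestronglyMeasurable
    · filter_upwards [hnorm] with u hu
      rw [Real.norm_eq_abs, abs_abs]
      calc |⟪a, u⟫| ≤ ‖a‖ * ‖u‖ := abs_real_inner_le_norm a u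
      _ = ‖a‖ := by rw [hu, mul_one]
  have hsq : ∀ a : EuclideanSpace ℝ (Fin n), Integrable (fun u => ⟪a, u⟫ ^ 2) μ := by
    intro a
    have := hmul a a
    simpa [sq] using this
  -- polarization
  have hpol : ∀ a b : EuclideanSpace ℝ (Fin n), ∫ u, ⟪a, u⟫ * ⟪b, u⟫ ∂μ = ⟪a, b⟫ := by
    intro a b
    have h1 : ∀ u : EuclideanSpace ℝ (Fin n),
        ⟪a, u⟫ * ⟪b, u⟫ = (⟪a + b, u⟫ ^ 2 - ⟪a - b, u⟫ ^ 2) / 4 := by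
      intro u; rw [inner_add_left, inner_sub_left]; ring
    calc ∫ u, ⟪a, u⟫ * ⟪b, u⟫ ∂μ = ∫ u, (⟪a + b, u⟫ ^ 2 - ⟪a - b, u⟫ ^ 2) / 4 ∂μ := by
          simp_rw [h1]
    _ = ((∫ u, ⟪a + b, u⟫ ^ 2 ∂μ) - ∫ u, ⟪a - b, u⟫ ^ 2 ∂μ) / 4 := by
          rw [integral_div, integral_sub (hsq _) (hsq _)]
    _ = (‖a + b‖ ^ 2 - ‖a - b‖ ^ 2) / 4 := by rw [hiso, hiso]
    _ = ⟪a, b⟫ := by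
          rw [norm_add_sq_real, norm_sub_sq_real]; ring
  -- projection identity
  have hproj : ∀ u : EuclideanSpace ℝ (Fin n),
      ⟪x, u⟫ = ⟪x, (Submodule.orthogonalProjection H u : EuclideanSpace ℝ (Fin n))⟫ := by
    intro u
    have hm : u - (Submodule.orthogonalProjection H u : EuclideanSpace ℝ (Fin n)) ∈ Hᗮ :=
      Submodule.sub_starProjection_mem_orthogonal (K := H) u
    have h0 : ⟪x, u - (Submodule.orthogonalProjection H u : EuclideanSpace ℝ (Fin n))⟫ = 0 :=
      (Submodule.mem_orthogonal H _).mp hm x hx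
    rw [inner_sub_right] at h0
    linarith
  -- rewrite RHS
  have hset : (∫ u in {u | (Submodule.orthogonalProjection H u : EuclideanSpace ℝ (Fin n)) ≠ 0},
        |⟪x, (Submodule.orthogonalProjection H u : EuclideanSpace ℝ (Fin n))⟫| ∂μ) =
      ∫ u, |⟪x, u⟫| ∂μ := by
    rw [setIntegral_eq_integral_of_forall_compl_eq_zero (f := fun u =>
        |⟪x, (Submodule.orthogonalProjection H u : EuclideanSpace ℝ (Fin n))⟫|) (fun u hu => by
      simp only [Set.mem_setOf_eq, not_not] at hu
      simp [hu])]
    congr 1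
    ext u
    rw [hproj u]
  rw [hset]
  apply Real.sSup_le
  · rintro r ⟨y, ⟨hyC, hyH⟩, rfl⟩
    have hb : ∀ᵐ u ∂μ, ⟪x, u⟫ * ⟪y, u⟫ ≤ |⟪x, u⟫| := by
      filter_upwards [hsupp] with u hu
      have h1 : ⟪y, u⟫ ≤ 1 := hyC u (hC ▸ subset_convexHull ℝ _ hu)
      have h2 : ⟪y, -u⟫ ≤ 1 :=
        hyC (-u) (hC ▸ subset_convexHull ℝ _ (neg_mem_msupport μ heven hu))
      rw [inner_neg_right] at h2
      have habs : |⟪y, u⟫| ≤ 1 := abs_le.mpr ⟨by linarith, h1⟩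
      calc ⟪x, u⟫ * ⟪y, u⟫ ≤ |⟪x, u⟫ * ⟪y, u⟫| := le_abs_self _
      _ = |⟪x, u⟫| * |⟪y, u⟫| := abs_mul _ _
      _ ≤ |⟪x, u⟫| * 1 := mul_le_mul_of_nonneg_left habs (abs_nonneg _)
      _ = |⟪x, u⟫| := mul_one _
    calc ⟪x, y⟫ = ∫ u, ⟪x, u⟫ * ⟪y, u⟫ ∂μ := (hpol x y).symm
    _ ≤ ∫ u, |⟪x, u⟫| ∂μ := integral_mono_ae (hmul x y) (hint x) hb
  · exact integral_nonneg fun u => abs_nonneg _
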